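/- Let σ_b² > 0, P_a > 0, 0 ≤ P_min < P_max, and p_j ∈ [0,1] be reals. Define C_n = log₂(1 + P_a/(σ_b² + P_max)), C_j = log₂(1 + P_a/(σ_b² + P_min)), C_f = log₂(1 + P_a/σ_b²), P_r(R) = P_a/(2^R − 1) − σ_b², and the covert throughput Ω(R) = R for 0 ≤ R ≤ C_n, Ω(R) = R·(1 − p_j·(P_max − P_r(R))/(P_max − P_min)) for C_n ≤ R ≤ C_j, and Ω(R) = (1 − p_j)·R for C_j ≤ R ≤ C_f (these pieces agree at R = C_n and R = C_j). Then for every R ∈ [0, C_f] one has Ω(R) ≤ max(Ω(C_n), Ω(C_f)) = max(C_n, (1 − p_j)·C_f); that is, the maximum of the covert throughput over [0, C_f] is attained at R = C_n or at R = C_f. -/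

import Mathlib

open Real Set

private lemma log_ge_aux {t : ℝ} (ht : 0 ≤ t) : 2*t/(2+t) ≤ Real.log (1+t) := by
  set φ : ℝ → ℝ := fun t => Real.log (1+t) - 2*t/(2+t) with hφ
  have hd : ∀ s : ℝ, -1 < s → HasDerivAt φ (1/(1+s) - 4/(2+s)^2) s := by
    intro s hs
    have h1 : HasDerivAt (fun s : ℝ => Real.log (1+s)) (1/(1+s)) s := by
      have := (HasDerivAt.const_add 1 (hasDerivAt_id s)).log (by linarith : (1:ℝ)+s ≠ 0)
      simpa using this
    have h2 : HasDerivAt (fun s : ℝ => 2*s/(2+s)) ((2*1*(2+s) - 2*s*1)/(2+s)^2) s :=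
      ((hasDerivAt_id s).const_mul 2).div (HasDerivAt.const_add 2 (hasDerivAt_id s))
        (by linarith)
    have := h1.sub h2
    refine this.congr_deriv ?_
    have : (2:ℝ)+s ≠ 0 := by linarith
    field_simp
    ring
  have hmono : MonotoneOn φ (Ici (0:ℝ)) := by
    apply monotoneOn_of_deriv_nonneg (convex_Ici 0)
    · intro x hx
      exact ((hd x (by simp at hx; linarith)).continuousAt).continuousWithinAt
    · rw [interior_Ici]
      intro x hx
      exact ((hd x (by simp at hx; linarith)).differentiableAt).differentiableWithinAt
    · rw [interior_Ici]
      intro x hx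
      simp only [mem_Ioi] at hx
      rw [(hd x (by linarith)).deriv]
      rw [sub_nonneg, div_le_div_iff₀ (by positivity) (by positivity)]
      nlinarith
  have h0 : φ 0 = 0 := by simp [hφ]
  have := hmono (self_mem_Ici) (mem_Ici.2 ht) ht
  rw [h0] at this
  simp only [hφ] at this
  linarith

private lemma inv_log_concave {c : ℝ} (hc : 0 < c) :
    ConcaveOn ℝ (Set.Ioi (0:ℝ)) (fun x : ℝ => (Real.log (1 + c/x))⁻¹) := by
  set u : ℝ → ℝ := fun x => Real.log (1 + c/x) with hu_def
  have harg : ∀ x : ℝ, 0 < x → 1 < 1 + c/x := fun x hx => by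
    have : 0 < c/x := div_pos hc hx
    linarith
  have hupos : ∀ x : ℝ, 0 < x → 0 < u x := fun x hx => Real.log_pos (harg x hx)
  have hq : ∀ x : ℝ, 0 < x → 0 < x^2 + c*x := fun x hx => by positivity
  have hu : ∀ x : ℝ, 0 < x → HasDerivAt u (-(c/(x^2+c*x))) x := by
    intro x hx
    have h1 : HasDerivAt (fun y : ℝ => 1 + c/y) (c * -(x^2)⁻¹) x := by
      have := ((hasDerivAt_inv hx.ne').const_mul c).const_add 1
      simpa [div_eq_mul_inv] using this
    have := h1.log (by have := harg x hx; linarith)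
    convert this using 1
    have hx2 : x^2 + c*x ≠ 0 := (hq x hx).ne'
    field_simp
  set f' : ℝ → ℝ := fun x => c / ((x^2 + c*x) * (u x)^2) with hf'_def
  have h1 : ∀ x : ℝ, 0 < x → HasDerivAt (fun y => (u y)⁻¹) (f' x) x := by
    intro x hx
    have := (hu x hx).inv (hupos x hx).ne'
    refine this.congr_deriv ?_
    rw [hf'_def]
    field_simp
  set f'' : ℝ → ℝ := fun x =>
    (0 * ((x^2+c*x) * (u x)^2) - c * ((2*x+c) * (u x)^2 +
      (x^2+c*x) * (2 * u x ^ 1 * -(c/(x^2+c*x))))) / ((x^2+c*x) * (u x)^2)^2 with hf''_def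
  have h2 : ∀ x : ℝ, 0 < x → HasDerivAt f' (f'' x) x := by
    intro x hx
    have hpoly : HasDerivAt (fun y : ℝ => y^2 + c*y) (2*x+c) x := by
      have := (hasDerivAt_pow 2 x).add ((hasDerivAt_id x).const_mul c)
      refine this.congr_deriv ?_
      push_cast; ring
    have hupow : HasDerivAt (fun y => (u y)^2) (2 * u x ^ 1 * -(c/(x^2+c*x))) x :=
      (hu x hx).pow 2
    have hw : HasDerivAt (fun y => (y^2+c*y) * (u y)^2)
        ((2*x+c) * (u x)^2 + (x^2+c*x) * (2 * u x ^ 1 * -(c/(x^2+c*x)))) x :=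
      hpoly.mul hupow
    have hwne : (x^2+c*x) * (u x)^2 ≠ 0 := by
      have := hupos x hx; have := hq x hx; positivity
    exact (hasDerivAt_const x c).div hw hwne
  have h2neg : ∀ x : ℝ, 0 < x → f'' x ≤ 0 := by
    intro x hx
    have hup := hupos x hx
    have hqp := hq x hx
    have hkey : 2*c ≤ (2*x+c) * u x := by
      have ht : 0 ≤ c/x := (div_pos hc hx).le
      have h := log_ge_aux ht
      have heq : 2*(c/x)/(2+c/x) = 2*c/(2*x+c) := by field_simp
      rw [heq, div_le_iff₀ (by linarith : (0:ℝ) < 2*x+c)] at h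
      have hux : u x = Real.log (1+c/x) := rfl
      rw [hux]; linarith
    rw [hf''_def]
    apply div_nonpos_of_nonpos_of_nonneg _ (by positivity)
    have : 0 ≤ u x * ((2*x+c) * u x - 2*c) := by nlinarith
    have hcanc : (x^2+c*x) * (2 * u x ^ 1 * -(c/(x^2+c*x))) = -(2*c*u x) := by
      field_simp
    rw [hcanc]
    nlinarith
  apply concaveOn_of_hasDerivWithinAt2_nonpos (convex_Ioi 0) (f' := f') (f'' := f'')
  · intro x hx
    exact ((h1 x hx).continuousAt).continuousWithinAt
  · intro x hx
    rw [interior_Ioi] at hx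
    exact (h1 x hx).hasDerivWithinAt
  · intro x hx
    rw [interior_Ioi] at hx
    exact (h2 x hx).hasDerivWithinAt
  · intro x hx
    rw [interior_Ioi] at hx
    exact h2neg x hx

private lemma middle_bound {Pa a b x pj M : ℝ} (hPa : 0 < Pa) (ha : 0 < a)
    (hab : a < b) (hxa : a ≤ x) (hxb : x ≤ b)
    (hM1 : Real.logb 2 (1 + Pa/b) ≤ M) (hM2 : (1-pj) * Real.logb 2 (1 + Pa/a) ≤ M)
    (hM0 : 0 < M) :
    Real.logb 2 (1 + Pa/x) * (1 - pj * (b - x)/(b-a)) ≤ M := by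
  have hb : 0 < b := lt_of_lt_of_le ha (le_of_lt hab)
  have hx : 0 < x := lt_of_lt_of_le ha hxa
  have hba : 0 < b - a := by linarith
  set s' : ℝ := (b-x)/(b-a) with hs'_def
  set s : ℝ := (x-a)/(b-a) with hs_def
  have hs'0 : 0 ≤ s' := div_nonneg (by linarith) hba.le
  have hs0 : 0 ≤ s := div_nonneg (by linarith) hba.le
  have hsum : s' + s = 1 := by rw [hs'_def, hs_def]; field_simp; ring
  have hcomb : s' * a + s * b = x := by rw [hs'_def, hs_def]; field_simp; ring
  have hconc := (inv_log_concave hPa).2 (mem_Ioi.2 ha) (mem_Ioi.2 hb) hs'0 hs0 hsum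
  simp only [smul_eq_mul, hcomb] at hconc
  set A := Real.log (1 + Pa/a) with hA
  set B := Real.log (1 + Pa/b) with hB
  set X := Real.log (1 + Pa/x) with hX
  have hApos : 0 < A := Real.log_pos (by have : 0 < Pa/a := div_pos hPa ha; linarith)
  have hBpos : 0 < B := Real.log_pos (by have : 0 < Pa/b := div_pos hPa hb; linarith)
  have hXpos : 0 < X := Real.log_pos (by have : 0 < Pa/x := div_pos hPa hx; linarith)
  have hL : 0 < Real.log 2 := Real.log_pos (by norm_num)
  set L := Real.log 2 with hLdef
  rw [Real.logb, ← hX, ← hLdef]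
  rw [Real.logb, ← hB, ← hLdef] at hM1
  rw [Real.logb, ← hA, ← hLdef] at hM2
  have hconc' : s' * B * X + s * A * X ≤ A * B := by
    have h := mul_le_mul_of_nonneg_right hconc (by positivity : (0:ℝ) ≤ A * B * X)
    calc s' * B * X + s * A * X
        = (s' * A⁻¹ + s * B⁻¹) * (A * B * X) := by field_simp
      _ ≤ X⁻¹ * (A * B * X) := h
      _ = A * B := by field_simp
  have hM1' : B ≤ M * L := by rw [div_le_iff₀ hL] at hM1; linarith
  have hM2' : (1-pj) * A ≤ M * L := by
    rw [show (1-pj) * (A / L) = ((1-pj)*A)/L by ring, div_le_iff₀ hL] at hM2; linarith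
  have hell : 1 - pj * (b - x)/(b-a) = s' * (1-pj) + s := by
    rw [hs'_def, hs_def]; field_simp; ring
  rw [hell]
  rw [show X / L * (s' * (1-pj) + s) = X * (s' * (1-pj) + s) / L by ring, div_le_iff₀ hL]
  have key : X * (s' * (1-pj) + s) * (A * B) ≤ M * L * (A * B) := by
    have t1 : ((1-pj) * A) * (s' * B * X) ≤ (M*L) * (s' * B * X) :=
      mul_le_mul_of_nonneg_right hM2' (by positivity)
    have t3 : (M*L) * (s' * B * X + s * A * X) ≤ (M*L) * (A * B) :=
      mul_le_mul_of_nonneg_left hconc' (by positivity)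
    have t2 : (M*L) * (s * A * X) ≥ B * (s * A * X) := by
      apply mul_le_mul_of_nonneg_right hM1' (by positivity)
    nlinarith [t1, t2, t3]
  have hAB : 0 < A * B := by positivity
  exact le_of_mul_le_mul_right key hAB

theorem covert_throughput_max_at_Cn_or_Cf
    (σb Pa Pmin Pmax pj : ℝ)
    (hσb : 0 < σb) (hPa : 0 < Pa) (hPmin : 0 ≤ Pmin) (hlt : Pmin < Pmax)
    (hpj0 : 0 ≤ pj) (hpj1 : pj ≤ 1)
    (Cn Cj Cf : ℝ)
    (hCn : Cn = Real.logb 2 (1 + Pa / (σb + Pmax)))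
    (hCj : Cj = Real.logb 2 (1 + Pa / (σb + Pmin)))
    (hCf : Cf = Real.logb 2 (1 + Pa / σb))
    (Pr : ℝ → ℝ) (hPr : ∀ R, Pr R = Pa / ((2 : ℝ) ^ R - 1) - σb)
    (Ω : ℝ → ℝ)
    (hΩ : ∀ R, Ω R =
      if R ≤ Cn then R
      else if R ≤ Cj then R * (1 - pj * (Pmax - Pr R) / (Pmax - Pmin))
      else (1 - pj) * R) :
    (∀ R ∈ Set.Icc (0 : ℝ) Cf, Ω R ≤ max (Ω Cn) (Ω Cf)) ∧
    max (Ω Cn) (Ω Cf) = max Cn ((1 - pj) * Cf) := by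
  have h2pos : (0:ℝ) < 2 := by norm_num
  have h2ne : (2:ℝ) ≠ 1 := by norm_num
  have hPmax : 0 < Pmax := lt_of_le_of_lt hPmin hlt
  have hbpos : 0 < σb + Pmax := by linarith
  have hapos : 0 < σb + Pmin := by linarith
  have hdb : 0 < Pa/(σb+Pmax) := div_pos hPa hbpos
  have hda : 0 < Pa/(σb+Pmin) := div_pos hPa hapos
  have hdf : 0 < Pa/σb := div_pos hPa hσb
  have hCnpos : 0 < Cn := by
    rw [hCn]; exact Real.logb_pos (by norm_num) (by linarith)
  have hCnCf : Cn < Cf := by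
    rw [hCn, hCf]
    apply Real.logb_lt_logb (by norm_num) (by linarith)
    have : Pa/(σb+Pmax) < Pa/σb := by
      rw [div_lt_div_iff₀ hbpos hσb]; nlinarith
    linarith
  have hCjCf : Cj ≤ Cf := by
    rw [hCj, hCf]
    apply Real.logb_le_logb_of_le (by norm_num) (by linarith)
    have : Pa/(σb+Pmin) ≤ Pa/σb := by
      rw [div_le_div_iff₀ hapos hσb]; nlinarith
    linarith
  have hΩCn : Ω Cn = Cn := by rw [hΩ Cn]; simp
  have hΩCf : Ω Cf = (1-pj) * Cf := by
    rw [hΩ Cf, if_neg (not_le.2 hCnCf)]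
    by_cases h : Cf ≤ Cj
    · rw [if_pos h]
      have hPmin0 : Pmin = 0 := by
        rw [hCj, hCf] at h
        rw [Real.logb_le_logb (by norm_num) (by linarith) (by linarith)] at h
        have h' : Pa/σb ≤ Pa/(σb+Pmin) := by linarith
        rw [div_le_div_iff₀ hσb hapos] at h'
        nlinarith
      have hPrCf : Pr Cf = 0 := by
        rw [hPr]
        have h2Cf : (2:ℝ)^Cf = 1 + Pa/σb := by
          rw [hCf]; exact Real.rpow_logb h2pos h2ne (by linarith)
        rw [h2Cf]
        field_simp
        rw [show σb + Pa - σb = Pa by ring, div_self hPa.ne']; ring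
      rw [hPrCf, hPmin0]
      field_simp
      ring
      rw [mul_assoc (Cf*pj), mul_inv_cancel₀ hPmax.ne']; ring
    · rw [if_neg h]
  refine ⟨?_, by rw [hΩCn, hΩCf]⟩
  intro R hR
  obtain ⟨hR0, hRCf⟩ := hR
  rw [hΩ R, hΩCn, hΩCf]
  split_ifs with h1 h2
  · exact le_trans h1 (le_max_left _ _)
  · push_neg at h1
    have hRpos : 0 < R := hCnpos.trans h1
    have h2R1 : (1:ℝ) < (2:ℝ)^R := by
      have h0 : (2:ℝ)^(0:ℝ) < (2:ℝ)^R := (Real.rpow_lt_rpow_left_iff one_lt_two).2 hRpos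
      simpa using h0
    set z := (2:ℝ)^R - 1 with hz
    have hzpos : 0 < z := by rw [hz]; linarith
    set x := Pa / z with hxdef
    have hxpos : 0 < x := div_pos hPa hzpos
    have hkey1 : 1 + Pa/x = (2:ℝ)^R := by
      have hPx : Pa/x = z := by rw [hxdef]; field_simp
      rw [hPx, hz]; ring
    have hfx : Real.logb 2 (1 + Pa/x) = R := by
      rw [hkey1]; exact Real.logb_rpow h2pos h2ne
    have h2Cj : (2:ℝ)^Cj = 1 + Pa/(σb+Pmin) := by
      rw [hCj]; exact Real.rpow_logb h2pos h2ne (by linarith)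
    have h2Cn : (2:ℝ)^Cn = 1 + Pa/(σb+Pmax) := by
      rw [hCn]; exact Real.rpow_logb h2pos h2ne (by linarith)
    have hxa : σb + Pmin ≤ x := by
      have hle : (2:ℝ)^R ≤ (2:ℝ)^Cj := (Real.rpow_le_rpow_left_iff one_lt_two).2 h2
      rw [h2Cj] at hle
      have hz' : z ≤ Pa/(σb+Pmin) := by rw [hz]; linarith
      rw [hxdef]
      calc σb + Pmin = Pa / (Pa/(σb+Pmin)) := by field_simp
        _ ≤ Pa / z := by gcongr
    have hxb : x ≤ σb + Pmax := by
      have hlt' : (2:ℝ)^Cn < (2:ℝ)^R := (Real.rpow_lt_rpow_left_iff one_lt_two).2 h1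
      rw [h2Cn] at hlt'
      have hz' : Pa/(σb+Pmax) ≤ z := by rw [hz]; linarith
      rw [hxdef]
      calc Pa / z ≤ Pa / (Pa/(σb+Pmax)) := by gcongr
        _ = σb + Pmax := by field_simp
    have hPrR : Pr R = x - σb := by rw [hPr R, hxdef, hz]
    rw [hPrR]
    have hgoal_eq : R * (1 - pj * (Pmax - (x - σb)) / (Pmax - Pmin))
        = Real.logb 2 (1 + Pa/x) * (1 - pj * ((σb+Pmax) - x)/((σb+Pmax)-(σb+Pmin))) := by
      rw [hfx]; ring_nf
    rw [hgoal_eq]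
    apply middle_bound hPa hapos (by linarith) hxa hxb
    · rw [← hCn]; exact le_max_left _ _
    · rw [← hCj]
      calc (1-pj)*Cj ≤ (1-pj)*Cf := mul_le_mul_of_nonneg_left hCjCf (by linarith)
        _ ≤ max Cn ((1-pj)*Cf) := le_max_right _ _
    · exact lt_of_lt_of_le hCnpos (le_max_left _ _)
  · calc (1-pj)*R ≤ (1-pj)*Cf := mul_le_mul_of_nonneg_left hRCf (by linarith)
      _ ≤ max Cn ((1-pj)*Cf) := le_max_right _ _
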